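/- For every n ≥ 1 and k ≥ 0, the monomial slide polynomials {𝔐_a : a a weak composition of length n with a_1+⋯+a_n = k} form a ℤ-basis of the ℤ-module of homogeneous polynomials of degree k in ℤ[x_1,…,x_n]. -/

import Mathlib

open scoped Classical

namespace SlidePaper

/-- Sum of the first `i` entries of a weak composition of length `n`. -/
def psum {n : ℕ} (a : Fin n → ℕ) (i : ℕ) : ℕ :=
  ∑ j ∈ Finset.univ.filter (fun j : Fin n => (j : ℕ) < i), a j

/-- `b` dominates `a`: all partial sums of `b` are at least those of `a`. -/
def Dominates {n : ℕ} (b a : Fin n → ℕ) : Prop :=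
  ∀ i : Fin (n + 1), psum a i ≤ psum b i

/-- The flattening of a weak composition: the list of its nonzero entries in order. -/
def flat {n : ℕ} (a : Fin n → ℕ) : List ℕ :=
  (List.ofFn a).filter (fun x => x ≠ 0)

/-- `β` refines `α`: `β` splits into consecutive blocks with sums `α₁, α₂, …`. -/
def Refines (β α : List ℕ) : Prop :=
  ∃ L : List (List ℕ), L.flatten = β ∧ L.map List.sum = α

/-- All weak compositions of length `n` with entries at most `k`. -/
def wcFinset (n k : ℕ) : Finset (Fin n → ℕ) :=
  Fintype.piFinset fun _ => Finset.range (k + 1)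

/-- The monomial slide polynomial `𝔐_a`. -/
noncomputable def slideM {n : ℕ} (a : Fin n → ℕ) : MvPolynomial (Fin n) ℤ :=
  ∑ b ∈ (wcFinset n (∑ i, a i)).filter (fun b => Dominates b a ∧ flat b = flat a),
    MvPolynomial.monomial (Finsupp.equivFunOnFinite.symm b) 1

/-- The fundamental slide polynomial `𝔉_a`. -/
noncomputable def slideF {n : ℕ} (a : Fin n → ℕ) : MvPolynomial (Fin n) ℤ :=
  ∑ b ∈ (wcFinset n (∑ i, a i)).filter (fun b => Dominates b a ∧ Refines (flat b) (flat a)),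
    MvPolynomial.monomial (Finsupp.equivFunOnFinite.symm b) 1

/-- A weak composition is quasi-flat if its nonzero entries occupy consecutive positions. -/
def QuasiFlat {n : ℕ} (a : Fin n → ℕ) : Prop :=
  ∀ i j l : Fin n, i ≤ j → j ≤ l → a i ≠ 0 → a l ≠ 0 → a j ≠ 0

/-- `b` strongly dominates `a`. -/
def StronglyDominates {n : ℕ} (b a : Fin n → ℕ) : Prop :=
  Dominates b a ∧ ∀ c : Fin n → ℕ, Dominates c a → flat c = flat b → Dominates c b

/-- The exponent vector placing the parts of `α` at the positions `i`. -/
noncomputable def placeExp {n : ℕ} (α : List ℕ) (i : Fin α.length → Fin n) : Fin n →₀ ℕ :=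
  ∑ t : Fin α.length, Finsupp.single (i t) (α.get t)

/-- `f` is quasisymmetric in the variables `x_1, …, x_k` (0-indexed: `x_0, …, x_{k-1}`). -/
def IsQuasisymmetricIn {n : ℕ} (k : ℕ) (f : MvPolynomial (Fin n) ℤ) : Prop :=
  ∀ α : List ℕ, (∀ x ∈ α, 0 < x) →
    ∀ i j : Fin α.length → Fin n, StrictMono i → StrictMono j →
      (∀ t, (i t : ℕ) < k) → (∀ t, (j t : ℕ) < k) →
      MvPolynomial.coeff (placeExp α i) f = MvPolynomial.coeff (placeExp α j) f

/-- The monomial quasisymmetric polynomial `M_α(x_1, …, x_k)` inside `ℤ[x_1, …, x_n]`. -/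
noncomputable def Mqs (n k : ℕ) (α : List ℕ) : MvPolynomial (Fin n) ℤ :=
  ∑ i ∈ (Finset.univ : Finset (Fin α.length → Fin n)).filter
      (fun i : Fin α.length → Fin n => StrictMono i ∧ ∀ t, (i t : ℕ) < k),
    ∏ t : Fin α.length, (MvPolynomial.X (i t) : MvPolynomial (Fin n) ℤ) ^ α.get t

/-- The fundamental quasisymmetric polynomial `F_α(x_1, …, x_k)` inside `ℤ[x_1, …, x_n]`. -/
noncomputable def Fqs (n k : ℕ) (α : List ℕ) : MvPolynomial (Fin n) ℤ :=
  ∑ c ∈ (Finset.univ : Finset (Composition α.sum)).filter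
      (fun c => Refines c.blocks α ∧ c.blocks.length ≤ k),
    Mqs n k c.blocks

/-- Place the weak composition `a` (of length `N`) at offset `k` inside length `M`. -/
def shiftComp {N : ℕ} (k M : ℕ) (a : Fin N → ℕ) : Fin M → ℕ :=
  fun i => if h : k ≤ (i : ℕ) ∧ (i : ℕ) - k < N then a ⟨(i : ℕ) - k, h.2⟩ else 0

/-- Spread the values `g` to positions `ι` inside a weak composition of length `n`. -/
def spread {l n : ℕ} (ι : Fin l → Fin n) (g : Fin l → ℕ) : Fin n → ℕ :=
  fun i => ∑ k, if ι k = i then g k else 0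

/-- The monomial quasisymmetric function `M_α` in infinitely many variables. -/
noncomputable def MqsFun (α : List ℕ) : MvPowerSeries ℕ ℤ :=
  fun d => if ∃ i : Fin α.length → ℕ, StrictMono i ∧
      d = ∑ t : Fin α.length, Finsupp.single (i t) (α.get t) then 1 else 0

/-- The fundamental quasisymmetric function `F_α` in infinitely many variables. -/
noncomputable def FqsFun (α : List ℕ) : MvPowerSeries ℕ ℤ :=
  ∑ c ∈ (Finset.univ : Finset (Composition α.sum)).filter (fun c => Refines c.blocks α),
    MqsFun c.blocks

/-- The cells of the Young diagram of `lam` (French notation): row `r` (from the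
bottom, 0-indexed) has `lam.get r` cells. -/
abbrev Cells (lam : List ℕ) := Σ r : Fin lam.length, Fin (lam.get r)

/-- A filling of `lam` with entries in `{1, …, n}` (encoded as `Fin n`) is a semistandard
Young tableau: rows weakly increase left to right, columns strictly increase bottom to top. -/
def IsSSYT {n : ℕ} {lam : List ℕ} (T : Cells lam → Fin n) : Prop :=
  (∀ (r : Fin lam.length) (c c' : Fin (lam.get r)), c ≤ c' → T ⟨r, c⟩ ≤ T ⟨r, c'⟩) ∧
  (∀ (r r' : Fin lam.length) (c' : Fin (lam.get r')) (h : (c' : ℕ) < lam.get r),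
      (r : ℕ) < (r' : ℕ) → T ⟨r, ⟨c', h⟩⟩ < T ⟨r', c'⟩)

/-- The weight of a filling: the `v`-th entry counts the occurrences of the value `v`. -/
def wtT {n : ℕ} {lam : List ℕ} (T : Cells lam → Fin n) : Fin n → ℕ :=
  fun v => (Finset.univ.filter (fun x : Cells lam => T x = v)).card

/-- A filling is quasi-Yamanouchi if for every value `v > 1`, the leftmost occurrence of `v`
lies weakly left of some occurrence of `v - 1`. -/
def IsQY {n : ℕ} {lam : List ℕ} (T : Cells lam → Fin n) : Prop :=
  ∀ (v : Fin n) (x : Cells lam), T x = v → 0 < (v : ℕ) →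
    (∀ y : Cells lam, T y = v → (x.2 : ℕ) ≤ (y.2 : ℕ)) →
    ∃ z : Cells lam, (T z : ℕ) + 1 = (v : ℕ) ∧ (x.2 : ℕ) ≤ (z.2 : ℕ)

/-- The Schur polynomial `s_lam(x_1, …, x_n)` as the generating function of
semistandard Young tableaux. -/
noncomputable def schurPoly (n : ℕ) (lam : List ℕ) : MvPolynomial (Fin n) ℤ :=
  ∑ T ∈ (Finset.univ : Finset (Cells lam → Fin n)).filter (fun T => IsSSYT T),
    MvPolynomial.monomial (Finsupp.equivFunOnFinite.symm (wtT T)) 1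

/-- One destandardization step on fillings: for some value `v` occurring in `T` whose
leftmost occurrence is strictly right of every occurrence of `v - 1`, every `v` is
decremented to `v - 1`. -/
def TabStep {n : ℕ} {lam : List ℕ} (T T' : Cells lam → Fin n) : Prop :=
  ∃ v : Fin n, 0 < (v : ℕ) ∧ (∃ x, T x = v) ∧
    (∀ x y : Cells lam, T x = v → (T y : ℕ) + 1 = (v : ℕ) → (y.2 : ℕ) < (x.2 : ℕ)) ∧
    ∀ x : Cells lam, (T' x : ℕ) = if T x = v then (v : ℕ) - 1 else (T x : ℕ)

/-- The reading word of a set of crosses: rows are read from top to bottom, each row from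
left to right, the cross in (0-indexed) row `i` and column `j` recording the letter `i + j`
(representing the simple transposition swapping `i + j` and `i + j + 1` of `{0, 1, 2, …}`). -/
def readWord (P : Finset (ℕ × ℕ)) : List ℕ :=
  ((List.range (P.sup Prod.fst + 1)).reverse).flatMap
    (fun i => ((List.range (P.sup Prod.snd + 1)).filter (fun j => decide ((i, j) ∈ P))).map
      (fun j => i + j))

/-- The permutation `s_{i_ℓ} ⋯ s_{i_1}` associated to the word `(i_1, …, i_ℓ)`,
where `s_k` swaps `k` and `k + 1`. -/
def wordPerm (l : List ℕ) : Equiv.Perm ℕ :=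
  ((l.map (fun k => Equiv.swap k (k + 1))).reverse).prod

/-- A word is reduced if no shorter word has the same product. -/
def IsReducedWord (l : List ℕ) : Prop :=
  ∀ l' : List ℕ, wordPerm l' = wordPerm l → l.length ≤ l'.length

/-- `P` is a reduced pipe dream of shape `w`: the pipes trace out `w` and no two pipes
cross more than once, equivalently the reading word of `P` is a reduced word for `w`. -/
def IsPD (w : Equiv.Perm ℕ) (P : Finset (ℕ × ℕ)) : Prop :=
  wordPerm (readWord P) = w ∧ IsReducedWord (readWord P)

/-- `P` is a quasi-Yamanouchi pipe dream of shape `w`: for every row, the westernmost cross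
is in the first column or lies weakly west of some cross in the row above. -/
def IsQPD (w : Equiv.Perm ℕ) (P : Finset (ℕ × ℕ)) : Prop :=
  IsPD w P ∧ ∀ i j : ℕ, (i, j) ∈ P → (∀ j', (i, j') ∈ P → j ≤ j') →
    (j = 0 ∨ ∃ j', (i + 1, j') ∈ P ∧ j ≤ j')

/-- One destandardization step on pipe dreams: a row with no cross in the first column,
all of whose crosses lie strictly east of every cross in the row above, has all its
crosses moved one step northwest. -/
def PDStep (P P' : Finset (ℕ × ℕ)) : Prop :=
  ∃ r : ℕ, (∃ j, (r, j) ∈ P) ∧ (r, 0) ∉ P ∧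
    (∀ j j', (r, j) ∈ P → (r + 1, j') ∈ P → j' < j) ∧
    P' = P.filter (fun p => p.1 ≠ r) ∪
      (P.filter (fun p => p.1 = r)).image (fun p => (r + 1, p.2 - 1))

/-- The number of crosses of `P` in (0-indexed) row `i`. -/
def rowWt (P : Finset (ℕ × ℕ)) (i : ℕ) : ℕ := (P.filter (fun p => p.1 = i)).card

/-- The weight of a pipe dream, as a weak composition of length `n`. -/
def wtFin (n : ℕ) (P : Finset (ℕ × ℕ)) : Fin n → ℕ := fun i => rowWt P (i : ℕ)

/-- The flattened weight of a pipe dream: the list of nonzero row counts, bottom row first. -/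
def flatWt (P : Finset (ℕ × ℕ)) : List ℕ :=
  ((List.range (P.sup Prod.fst + 1)).map (rowWt P)).filter (fun x => x ≠ 0)

/-- The Schubert polynomial of `w` in the variables `x_1, …, x_n`, as the generating
function of reduced pipe dreams of shape `w`. -/
noncomputable def SchubertPoly (n : ℕ) (w : Equiv.Perm ℕ) : MvPolynomial (Fin n) ℤ :=
  ∑ᶠ P ∈ {P : Finset (ℕ × ℕ) | IsPD w P},
    MvPolynomial.monomial (Finsupp.equivFunOnFinite.symm (wtFin n P)) 1

/-- The Lehmer code of `w` (0-indexed): `lehmer w i` counts `j > i` with `w j < w i`. -/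
noncomputable def lehmer (w : Equiv.Perm ℕ) (i : ℕ) : ℕ :=
  Set.ncard {j : ℕ | i < j ∧ w j < w i}

/-- The Lehmer code of `w` as a weak composition of length `n`. -/
noncomputable def lehmerFin (n : ℕ) (w : Equiv.Perm ℕ) : Fin n → ℕ :=
  fun i => lehmer w (i : ℕ)

/-- The number of inversions of `w`. -/
noncomputable def invCount (w : Equiv.Perm ℕ) : ℕ :=
  Set.ncard {p : ℕ × ℕ | p.1 < p.2 ∧ w p.2 < w p.1}

/-- The largest entry of the Lehmer code of `w`. -/
noncomputable def maxLehmer (w : Equiv.Perm ℕ) : ℕ :=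
  sSup (Set.range (lehmer w))

/-- The (0-indexed) position of the first descent of `w`. -/
noncomputable def firstDescent (w : Equiv.Perm ℕ) : ℕ :=
  sInf {i : ℕ | w (i + 1) < w i}

/-- `δ(w) = 1` if every position attaining `max(L(w))` is at or before the first descent,
and `δ(w) = 0` otherwise. -/
noncomputable def delta (w : Equiv.Perm ℕ) : ℤ :=
  if ∀ i : ℕ, lehmer w i = maxLehmer w → i ≤ firstDescent w then 1 else 0

/-- `η(w) = inv(w) − max(L(w)) + δ(w) − min{i : w_i > w_{i+1}}`. -/
noncomputable def eta (w : Equiv.Perm ℕ) : ℤ :=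
  (invCount w : ℤ) - (maxLehmer w : ℤ) + delta w - ((firstDescent w : ℤ) + 1)

/-- The decomposition of a list into maximal strictly increasing runs. -/
def runsStrict : List ℕ → List (List ℕ)
  | [] => []
  | x :: rest =>
    match runsStrict rest, rest with
    | r :: rs, y :: _ => if x < y then (x :: r) :: rs else [x] :: r :: rs
    | _, _ => [[x]]

/-- The descent composition of a word: lengths of its maximal increasing runs, a new run
beginning whenever a letter is followed by a weakly smaller letter. -/
def desStrict (l : List ℕ) : List ℕ := (runsStrict l).map List.length

/-- The decomposition of a list into maximal weakly increasing runs. -/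
def runsWeak : List ℕ → List (List ℕ)
  | [] => []
  | x :: rest =>
    match runsWeak rest, rest with
    | r :: rs, y :: _ => if x ≤ y then (x :: r) :: rs else [x] :: r :: rs
    | _, _ => [[x]]

/-- The descent composition of a word: the lengths of its maximal weakly increasing runs. -/
def desComp (l : List ℕ) : List ℕ := (runsWeak l).map List.length

/-- The permutation `1^m × w`, fixing `0, …, m-1` and acting by `w` shifted by `m` above. -/
def shiftPerm (m : ℕ) (w : Equiv.Perm ℕ) : Equiv.Perm ℕ where
  toFun i := if i < m then i else w (i - m) + m
  invFun i := if i < m then i else w.symm (i - m) + m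
  left_inv i := by
    dsimp only
    by_cases h : i < m
    · simp [h]
    · have h2 : ¬ (w (i - m) + m < m) := by omega
      rw [if_neg h, if_neg h2, Nat.add_sub_cancel, Equiv.symm_apply_apply]
      omega
  right_inv i := by
    dsimp only
    by_cases h : i < m
    · simp [h]
    · have h2 : ¬ (w.symm (i - m) + m < m) := by omega
      rw [if_neg h, if_neg h2, Nat.add_sub_cancel, Equiv.apply_symm_apply]
      omega

/-- The quasi-shuffle product of two (strong) compositions, as a multiset of compositions. -/
def qShuffle : List ℕ → List ℕ → Multiset (List ℕ)
  | [], β => {β}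
  | α, [] => {α}
  | a :: α, b :: β =>
      ((qShuffle α (b :: β)).map (a :: ·)) + ((qShuffle (a :: α) β).map (b :: ·)) +
        ((qShuffle α β).map ((a + b) :: ·))
termination_by α β => α.length + β.length
decreasing_by all_goals (simp only [List.length_cons]; omega)

def shuffles : List ℕ → List ℕ → Multiset (List ℕ)
  | [], B => {B}
  | A, [] => {A}
  | x :: A, y :: B =>
      ((shuffles A (y :: B)).map (x :: ·)) + ((shuffles (x :: A) B).map (y :: ·))
termination_by A B => A.length + B.length
decreasing_by all_goals (simp only [List.length_cons]; omega)

/-- The word `(2n-1)^{a_1} (2n-3)^{a_2} ⋯ 1^{a_n}` associated to a weak composition `a`. -/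
def wordA {n : ℕ} (a : Fin n → ℕ) : List ℕ :=
  (List.ofFn (fun i : Fin n => List.replicate (a i) (2 * n - 2 * (i : ℕ) - 1))).flatten

/-- The word `(2n)^{b_1} (2n-2)^{b_2} ⋯ 2^{b_n}` associated to a weak composition `b`. -/
def wordB {n : ℕ} (b : Fin n → ℕ) : List ℕ :=
  (List.ofFn (fun i : Fin n => List.replicate (b i) (2 * n - 2 * (i : ℕ)))).flatten

/-- A list (padded with trailing zeros) dominates a weak composition of length `n`. -/
def DominatesList {n : ℕ} (l : List ℕ) (a : Fin n → ℕ) : Prop :=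
  ∀ i : Fin (n + 1), psum a (i : ℕ) ≤ ((l.take (i : ℕ)).sum)

/-- The number of letters of the `A`-word (the odd letters) in the `k`-th weakly
increasing run of `C`. -/
def runCountA (C : List ℕ) (k : Fin (runsWeak C).length) : ℕ :=
  (((runsWeak C).get k).filter (fun z => z % 2 = 1)).length

/-- The number of letters of the `B`-word (the even letters) in the `k`-th weakly
increasing run of `C`. -/
def runCountB (C : List ℕ) (k : Fin (runsWeak C).length) : ℕ :=
  (((runsWeak C).get k).filter (fun z => z % 2 = 0)).length

/-- The length of the `k`-th weakly increasing run of `C`. -/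
def runLen (C : List ℕ) (k : Fin (runsWeak C).length) : ℕ :=
  ((runsWeak C).get k).length

/-- `c = bump_{(a,b)}(C)`: the unique weak composition of length `n` obtained by inserting
zero parts into `Des(C)` so that the correspondingly placed `Des_A` and `Des_B` dominate
`a` and `b`, minimal in dominance order among all such insertions. -/
def IsBumpS {n : ℕ} (a b : Fin n → ℕ) (C : List ℕ) (c : Fin n → ℕ) : Prop :=
  ∃ ι : Fin (runsWeak C).length → Fin n, StrictMono ι ∧
    c = spread ι (runLen C) ∧
    Dominates (spread ι (runCountA C)) a ∧ Dominates (spread ι (runCountB C)) b ∧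
    ∀ ι' : Fin (runsWeak C).length → Fin n, StrictMono ι' →
      Dominates (spread ι' (runCountA C)) a → Dominates (spread ι' (runCountB C)) b →
      Dominates (spread ι' (runLen C)) c

/-- The multiplicity `[c ∣ a ⧢ b]` of `c` in the slide product of `a` and `b`: the number of
shuffles `C` of the words of `a` and `b` lying in the shuffle set `SS(a,b)` with
`bump_{(a,b)}(C) = c`. -/
noncomputable def slideMult {n : ℕ} (a b c : Fin n → ℕ) : ℕ :=
  Multiset.card ((shuffles (wordA a) (wordB b)).filter
    (fun C => DominatesList ((runsWeak C).map
        (fun r => (r.filter (fun z => z % 2 = 1)).length)) a ∧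
      DominatesList ((runsWeak C).map (fun r => (r.filter (fun z => z % 2 = 0)).length)) b ∧
      IsBumpS a b C c))

/-- Membership in the quasi-shuffle set `QSS(a,b)`: a pair `(γ_a, γ_b)` of weak compositions
of a common length at most `n` with `γ_a ≥ a`, `flat(γ_a) = flat(a)`, `γ_b ≥ b`,
`flat(γ_b) = flat(b)` (after padding with trailing zeros), and all entries of
`γ_a + γ_b` positive. -/
def InQSS {n : ℕ} (a b : Fin n → ℕ) (x : (l : ℕ) × (Fin l → ℕ) × (Fin l → ℕ)) : Prop :=
  x.1 ≤ n ∧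
  Dominates (shiftComp 0 n x.2.1) a ∧ flat x.2.1 = flat a ∧
  Dominates (shiftComp 0 n x.2.2) b ∧ flat x.2.2 = flat b ∧
  ∀ k : Fin x.1, 0 < x.2.1 k + x.2.2 k

/-- `c = bump_{(a,b)}(γ_a, γ_b)`: the unique weak composition `c` of length `n` with
`flat(c) = γ_a + γ_b` whose decomposition `c = c_a + c_b` satisfies `c_a ≥ a` and
`c_b ≥ b`, minimal in dominance order among all such compositions. -/
def IsBumpQ {n : ℕ} (a b : Fin n → ℕ) (x : (l : ℕ) × (Fin l → ℕ) × (Fin l → ℕ))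
    (c : Fin n → ℕ) : Prop :=
  ∃ ι : Fin x.1 → Fin n, StrictMono ι ∧
    c = spread ι (fun k => x.2.1 k + x.2.2 k) ∧
    Dominates (spread ι x.2.1) a ∧ Dominates (spread ι x.2.2) b ∧
    ∀ ι' : Fin x.1 → Fin n, StrictMono ι' →
      Dominates (spread ι' x.2.1) a → Dominates (spread ι' x.2.2) b →
      Dominates (spread ι' (fun k => x.2.1 k + x.2.2 k)) c

/-- The multiplicity `[c ∣ a ⧻ b]` of `c` in the quasi-slide product of `a` and `b`: the
number of pairs in the quasi-shuffle set `QSS(a,b)` whose bump is `c`. -/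
noncomputable def qsMult {n : ℕ} (a b c : Fin n → ℕ) : ℕ :=
  Nat.card {x : (l : ℕ) × (Fin l → ℕ) × (Fin l → ℕ) // InQSS a b x ∧ IsBumpQ a b x c}

/-- The Stanley symmetric function `S_w`. -/
noncomputable def StanleySym (w : Equiv.Perm ℕ) : MvPowerSeries ℕ ℤ :=
  ∑ᶠ l ∈ {l : List ℕ | wordPerm l = w ∧ IsReducedWord l}, FqsFun (desStrict l)

/-! ### Auxiliary lemmas for `monomialSlide_basis` -/

section BasisAux

variable {n : ℕ}

lemma list_sum_filter_ne_zero (l : List ℕ) : (l.filter (fun x => x ≠ 0)).sum = l.sum := by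
  induction l with
  | nil => simp
  | cons x xs ih =>
    simp only [ne_eq, decide_not] at ih ⊢
    by_cases hx : x = 0 <;> simp [List.filter_cons, hx, ih]

lemma sum_flat (a : Fin n → ℕ) : (flat a).sum = ∑ i, a i := by
  rw [flat, list_sum_filter_ne_zero, List.sum_ofFn]

lemma psum_le_total (a : Fin n → ℕ) (i : ℕ) : psum a i ≤ ∑ j, a j :=
  Finset.sum_le_sum_of_subset (Finset.filter_subset _ _)

/-- The total of all partial sums, used as an induction measure for dominance order. -/
def Wt (a : Fin n → ℕ) : ℕ := ∑ i : Fin (n + 1), psum a (i : ℕ)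

lemma Wt_le (a : Fin n → ℕ) : Wt a ≤ (n + 1) * (∑ j, a j) := by
  calc Wt a ≤ ∑ _i : Fin (n + 1), (∑ j, a j) :=
        Finset.sum_le_sum (fun i _ => psum_le_total a i)
    _ = (n + 1) * (∑ j, a j) := by
        simp [Finset.sum_const, Finset.card_univ, mul_comm]

lemma psum_succ (a : Fin n → ℕ) (j : ℕ) (h : j < n) :
    psum a (j + 1) = psum a j + a ⟨j, h⟩ := by
  rw [psum, psum]
  have hins : Finset.univ.filter (fun x : Fin n => (x : ℕ) < j + 1)
      = insert ⟨j, h⟩ (Finset.univ.filter (fun x : Fin n => (x : ℕ) < j)) := by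
    ext x
    simp only [Finset.mem_filter, Finset.mem_insert, Finset.mem_univ, true_and, Fin.ext_iff]
    omega
  rw [hins, Finset.sum_insert (by simp)]
  ring

lemma eq_of_forall_psum_eq {a b : Fin n → ℕ}
    (h : ∀ i : Fin (n + 1), psum a (i : ℕ) = psum b (i : ℕ)) : a = b := by
  funext j
  have h1 := h ⟨(j : ℕ), by omega⟩
  have h2 := h ⟨(j : ℕ) + 1, by omega⟩
  have e1 := psum_succ a (j : ℕ) j.isLt
  have e2 := psum_succ b (j : ℕ) j.isLt
  simp only [Fin.eta] at e1 e2
  simp only at h1 h2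
  omega

lemma Wt_lt_of_dominates_ne {a b : Fin n → ℕ} (hd : Dominates b a) (hne : a ≠ b) :
    Wt a < Wt b := by
  apply Finset.sum_lt_sum (fun i _ => hd i)
  by_contra hc
  push_neg at hc
  exact hne (eq_of_forall_psum_eq (fun i =>
    le_antisymm (hd i) (hc i (Finset.mem_univ i))))

lemma coeff_slideM (a c : Fin n → ℕ) :
    MvPolynomial.coeff (Finsupp.equivFunOnFinite.symm c) (slideM a) =
      if Dominates c a ∧ flat c = flat a then 1 else 0 := by
  classical
  have h1 : ∀ b : Fin n → ℕ, MvPolynomial.coeff (Finsupp.equivFunOnFinite.symm c)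
      (MvPolynomial.monomial (Finsupp.equivFunOnFinite.symm b) (1 : ℤ))
      = if b = c then 1 else 0 := by
    intro b
    rw [MvPolynomial.coeff_monomial, if_congr (Equiv.apply_eq_iff_eq _) rfl rfl]
  rw [slideM, MvPolynomial.coeff_sum]
  simp_rw [h1]
  rw [Finset.sum_ite_eq' _ c (fun _ => (1 : ℤ))]
  by_cases h : Dominates c a ∧ flat c = flat a
  · rw [if_pos h, if_pos]
    refine Finset.mem_filter.mpr ⟨?_, h⟩
    rw [wcFinset, Fintype.mem_piFinset]
    intro i
    rw [Finset.mem_range]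
    have h1 : c i ≤ ∑ j, c j :=
      Finset.single_le_sum (fun j _ => Nat.zero_le _) (Finset.mem_univ i)
    have h2 : ∑ j, c j = ∑ j, a j := by rw [← sum_flat, ← sum_flat, h.2]
    omega
  · rw [if_neg h, if_neg]
    intro hc
    exact h (Finset.mem_filter.mp hc).2

lemma degree_symm (b : Fin n → ℕ) :
    (Finsupp.equivFunOnFinite.symm b).degree = ∑ i, b i := by
  rw [Finsupp.degree_apply, Finset.sum_subset (Finset.subset_univ _)
    (fun x _ hx => Finsupp.notMem_support_iff.mp hx)]
  exact Finset.sum_congr rfl (fun i _ => rfl)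

lemma slideM_mem (a : Fin n → ℕ) :
    slideM a ∈ MvPolynomial.homogeneousSubmodule (Fin n) ℤ (∑ i, a i) := by
  rw [slideM]
  apply Submodule.sum_mem
  intro b hb
  rw [MvPolynomial.mem_homogeneousSubmodule]
  apply MvPolynomial.isHomogeneous_monomial
  rw [degree_symm]
  have hfb : flat b = flat a := (Finset.mem_filter.mp hb).2.2
  rw [← sum_flat, ← sum_flat, hfb]

lemma slideM_mem' (a : Fin n → ℕ) (k : ℕ) (h : ∑ i, a i = k) :
    slideM a ∈ MvPolynomial.homogeneousSubmodule (Fin n) ℤ k := h ▸ slideM_mem a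

lemma dominates_refl (a : Fin n → ℕ) : Dominates a a := fun _ => le_rfl

lemma self_mem_filter (a : Fin n → ℕ) :
    a ∈ (wcFinset n (∑ i, a i)).filter (fun b => Dominates b a ∧ flat b = flat a) := by
  refine Finset.mem_filter.mpr ⟨?_, dominates_refl a, rfl⟩
  rw [wcFinset, Fintype.mem_piFinset]
  intro i
  rw [Finset.mem_range]
  have : a i ≤ ∑ j, a j :=
    Finset.single_le_sum (fun j _ => Nat.zero_le _) (Finset.mem_univ i)
  omega

lemma monomial_mem_span (n k : ℕ) : ∀ (t : ℕ) (a : Fin n → ℕ), (∑ i, a i = k) →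
    (n + 1) * k ≤ Wt a + t →
    (MvPolynomial.monomial (Finsupp.equivFunOnFinite.symm a) (1 : ℤ)) ∈
      Submodule.span ℤ (Set.range
        (fun s : {a : Fin n → ℕ // ∑ i, a i = k} => slideM s.val)) := by
  intro t
  induction t with
  | zero =>
    intro a ha hW
    have hkey : ∀ b ∈ ((wcFinset n (∑ i, a i)).filter
        (fun b => Dominates b a ∧ flat b = flat a)).erase a,
        MvPolynomial.monomial (Finsupp.equivFunOnFinite.symm b) (1 : ℤ) ∈
          Submodule.span ℤ (Set.range
            (fun s : {a : Fin n → ℕ // ∑ i, a i = k} => slideM s.val)) := by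
      intro b hb
      exfalso
      obtain ⟨hne, hbf⟩ := Finset.mem_erase.mp hb
      obtain ⟨-, hdom, hfl⟩ := Finset.mem_filter.mp hbf
      have hlt : Wt a < Wt b := Wt_lt_of_dominates_ne hdom (fun h => hne h.symm)
      have hsb : ∑ j, b j = k := by rw [← sum_flat, hfl, sum_flat, ha]
      have := Wt_le b
      rw [hsb] at this
      omega
    have heq : MvPolynomial.monomial (Finsupp.equivFunOnFinite.symm a) (1 : ℤ)
        = slideM a - ∑ b ∈ ((wcFinset n (∑ i, a i)).filter
            (fun b => Dominates b a ∧ flat b = flat a)).erase a,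
          MvPolynomial.monomial (Finsupp.equivFunOnFinite.symm b) (1 : ℤ) := by
      rw [slideM, ← Finset.add_sum_erase _ _ (self_mem_filter a)]
      ring
    rw [heq]
    exact Submodule.sub_mem _ (Submodule.subset_span ⟨⟨a, ha⟩, rfl⟩)
      (Submodule.sum_mem _ hkey)
  | succ t ih =>
    intro a ha hW
    have hkey : ∀ b ∈ ((wcFinset n (∑ i, a i)).filter
        (fun b => Dominates b a ∧ flat b = flat a)).erase a,
        MvPolynomial.monomial (Finsupp.equivFunOnFinite.symm b) (1 : ℤ) ∈
          Submodule.span ℤ (Set.range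
            (fun s : {a : Fin n → ℕ // ∑ i, a i = k} => slideM s.val)) := by
      intro b hb
      obtain ⟨hne, hbf⟩ := Finset.mem_erase.mp hb
      obtain ⟨-, hdom, hfl⟩ := Finset.mem_filter.mp hbf
      have hlt : Wt a < Wt b := Wt_lt_of_dominates_ne hdom (fun h => hne h.symm)
      have hsb : ∑ j, b j = k := by rw [← sum_flat, hfl, sum_flat, ha]
      exact ih b hsb (by omega)
    have heq : MvPolynomial.monomial (Finsupp.equivFunOnFinite.symm a) (1 : ℤ)
        = slideM a - ∑ b ∈ ((wcFinset n (∑ i, a i)).filter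
            (fun b => Dominates b a ∧ flat b = flat a)).erase a,
          MvPolynomial.monomial (Finsupp.equivFunOnFinite.symm b) (1 : ℤ) := by
      rw [slideM, ← Finset.add_sum_erase _ _ (self_mem_filter a)]
      ring
    rw [heq]
    exact Submodule.sub_mem _ (Submodule.subset_span ⟨⟨a, ha⟩, rfl⟩)
      (Submodule.sum_mem _ hkey)

lemma slideM_linearIndependent (n k : ℕ) :
    LinearIndependent ℤ
      (fun s : {a : Fin n → ℕ // ∑ i, a i = k} => slideM s.val) := by
  rw [linearIndependent_iff']
  intro s g hsum a ha
  suffices h : ∀ m : ℕ, ∀ a ∈ s, Wt a.val < m → g a = 0 by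
    exact h (Wt a.val + 1) a ha (Nat.lt_succ_self _)
  intro m
  induction m with
  | zero => intro a _ h; omega
  | succ m ih =>
    intro a ha hW
    have hc := congrArg (MvPolynomial.coeff (Finsupp.equivFunOnFinite.symm a.val)) hsum
    rw [MvPolynomial.coeff_zero, MvPolynomial.coeff_sum] at hc
    simp_rw [MvPolynomial.coeff_smul, coeff_slideM] at hc
    rw [← Finset.add_sum_erase _ _ ha,
      if_pos ⟨dominates_refl a.val, rfl⟩] at hc
    have hz : ∀ b ∈ s.erase a,
        g b • (if Dominates a.val b.val ∧ flat a.val = flat b.val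
          then (1 : ℤ) else 0) = 0 := by
      intro b hb
      obtain ⟨hne, hbs⟩ := Finset.mem_erase.mp hb
      by_cases hcond : Dominates a.val b.val ∧ flat a.val = flat b.val
      · have hnev : b.val ≠ a.val := fun h => hne (Subtype.ext h)
        have hlt : Wt b.val < Wt a.val := Wt_lt_of_dominates_ne hcond.1 hnev
        have hgb : g b = 0 := ih b hbs (lt_of_lt_of_le hlt (Nat.lt_succ_iff.mp hW))
        rw [if_pos hcond, hgb, zero_smul]
      · rw [if_neg hcond, smul_zero]
    rw [Finset.sum_eq_zero hz, add_zero, smul_eq_mul, mul_one] at hc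
    exact hc

end BasisAux

/-- the monomial slide polynomials indexed by weak compositions of length `n`
and size `k` form a `ℤ`-basis of the homogeneous polynomials of degree `k`. -/
theorem monomialSlide_basis (n k : ℕ) (hn : 1 ≤ n) :
    ∃ B : Module.Basis {a : Fin n → ℕ // ∑ i, a i = k} ℤ
        (MvPolynomial.homogeneousSubmodule (Fin n) ℤ k),
      ∀ a : {a : Fin n → ℕ // ∑ i, a i = k},
        (B a : MvPolynomial (Fin n) ℤ) = slideM a.val := by
  classical
  let P := MvPolynomial.homogeneousSubmodule (Fin n) ℤ k
  let v : {a : Fin n → ℕ // ∑ i, a i = k} → MvPolynomial.homogeneousSubmodule (Fin n) ℤ k :=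
    fun a => ⟨slideM a.val, slideM_mem' a.val k a.2⟩
  have hcomp : (P.subtype ∘ v) = fun s : {a : Fin n → ℕ // ∑ i, a i = k} => slideM s.val :=
    rfl
  have hli : LinearIndependent ℤ v := by
    apply LinearIndependent.of_comp P.subtype
    rw [hcomp]
    exact slideM_linearIndependent n k
  have hsp : ⊤ ≤ Submodule.span ℤ (Set.range v) := by
    intro x _
    have hx : (x : MvPolynomial (Fin n) ℤ) ∈ Submodule.span ℤ
        (Set.range (fun s : {a : Fin n → ℕ // ∑ i, a i = k} => slideM s.val)) := by
      have hhom := (MvPolynomial.mem_homogeneousSubmodule k (x : MvPolynomial (Fin n) ℤ)).mp x.2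
      rw [← MvPolynomial.support_sum_monomial_coeff (x : MvPolynomial (Fin n) ℤ)]
      apply Submodule.sum_mem
      intro d hd
      have hdeg : d.degree = k := by
        rw [Finsupp.degree_eq_weight_one]
        exact hhom (MvPolynomial.mem_support_iff.mp hd)
      set a : Fin n → ℕ := Finsupp.equivFunOnFinite d with haa
      have hda : Finsupp.equivFunOnFinite.symm a = d := Equiv.symm_apply_apply _ d
      have hsa : ∑ i, a i = k := by
        rw [← degree_symm a, hda, hdeg]
      have hmono : MvPolynomial.monomial d (MvPolynomial.coeff d (x : MvPolynomial (Fin n) ℤ))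
          = (MvPolynomial.coeff d (x : MvPolynomial (Fin n) ℤ)) •
            MvPolynomial.monomial (Finsupp.equivFunOnFinite.symm a) (1 : ℤ) := by
        rw [hda, MvPolynomial.smul_monomial, smul_eq_mul, mul_one]
      rw [hmono]
      exact Submodule.smul_mem _ _
        (monomial_mem_span n k ((n + 1) * k) a hsa (by omega))
    have himg : Set.range (fun s : {a : Fin n → ℕ // ∑ i, a i = k} => slideM s.val)
        = P.subtype '' Set.range v := by
      ext y
      constructor
      · rintro ⟨s, rfl⟩; exact ⟨v s, ⟨s, rfl⟩, rfl⟩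
      · rintro ⟨z, ⟨s, rfl⟩, rfl⟩; exact ⟨s, rfl⟩
    rw [himg, Submodule.span_image] at hx
    obtain ⟨y, hy, hyx⟩ := hx
    have : y = x := Subtype.ext hyx
    rwa [← this]
  refine ⟨Module.Basis.mk hli hsp, fun a => ?_⟩
  rw [Module.Basis.mk_apply]

end SlidePaper
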